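/- Let C be an abelian rigid monoidal category over a field and let A be a Frobenius algebra in C that is simple as a left module over itself. Then for all objects U, V and all non-zero morphisms u : U → A and v : V → A, the composite μ ∘ (u ⊗ v) : U ⊗ V → A is non-zero, where μ is the multiplication of A. -/

import Mathlib

open CategoryTheory MonoidalCategory

section Aux

open CategoryTheory.Limits

variable {C : Type*} [Category C] [MonoidalCategory C]

/-- Multiplying by the unit on the left recovers a "generalized element" of `A`. -/
theorem stmt5_aux_unit {A : Mon C} {W : C} (w : W ⟶ A.X) :
    (λ_ W).inv ≫ (MonObj.one (X := A.X) ▷ W) ≫ ((A.X ◁ w) ≫ MonObj.mul (X := A.X)) = w := by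
  rw [← whisker_exchange_assoc, MonObj.one_mul]
  simp

/-- The module-map property of left multiplication `φ = (A ◁ u) ≫ μ`. -/
theorem stmt5_aux_modmap {A : Mon C} {W : C} (w : W ⟶ A.X) :
    (A.X ◁ ((A.X ◁ w) ≫ MonObj.mul (X := A.X))) ≫ MonObj.mul (X := A.X) =
      (α_ A.X A.X W).inv ≫ (MonObj.mul (X := A.X) ▷ W) ≫ ((A.X ◁ w) ≫ MonObj.mul (X := A.X)) := by
  have flip : (A.X ◁ MonObj.mul (X := A.X)) ≫ MonObj.mul (X := A.X) =
      (α_ A.X A.X A.X).inv ≫ (MonObj.mul (X := A.X) ▷ A.X) ≫ MonObj.mul (X := A.X) := by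
    rw [MonObj.mul_assoc A.X]; simp
  calc (A.X ◁ ((A.X ◁ w) ≫ MonObj.mul (X := A.X))) ≫ MonObj.mul (X := A.X)
      = (A.X ◁ (A.X ◁ w)) ≫ (A.X ◁ MonObj.mul (X := A.X)) ≫ MonObj.mul (X := A.X) := by simp
    _ = (A.X ◁ (A.X ◁ w)) ≫ (α_ A.X A.X A.X).inv ≫ (MonObj.mul (X := A.X) ▷ A.X) ≫ MonObj.mul (X := A.X) := by
        rw [flip]
    _ = (α_ A.X A.X W).inv ≫ ((A.X ⊗ A.X) ◁ w) ≫ (MonObj.mul (X := A.X) ▷ A.X) ≫ MonObj.mul (X := A.X) := by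
        rw [associator_inv_naturality_right_assoc]
    _ = (α_ A.X A.X W).inv ≫ (MonObj.mul (X := A.X) ▷ W) ≫ (A.X ◁ w) ≫ MonObj.mul (X := A.X) := by
        rw [← whisker_exchange_assoc]

end Aux

/-- Let `C` be an abelian rigid monoidal category and `A` a Frobenius algebra in `C`
(an algebra with `ε : A ⟶ 𝟙_C` such that `ε ∘ μ` is a non-degenerate pairing, witnessed
by a copairing `b` satisfying the snake identities) that is simple as a left module over
itself.  Then for all nonzero `u : U ⟶ A`, `v : V ⟶ A` the composite
`μ ∘ (u ⊗ v) : U ⊗ V ⟶ A` is nonzero. -/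
theorem stmt5 {C : Type*} [Category C] [Abelian C] [MonoidalCategory C]
    [RigidCategory C]
    (A : Mon C) (ε : A.X ⟶ 𝟙_ C) (b : 𝟙_ C ⟶ A.X ⊗ A.X)
    (snake₁ : (λ_ A.X).inv ≫ (b ▷ A.X) ≫ (α_ A.X A.X A.X).hom ≫
        (A.X ◁ (MonObj.mul (X := A.X) ≫ ε)) ≫ (ρ_ A.X).hom = 𝟙 A.X)
    (snake₂ : (ρ_ A.X).inv ≫ (A.X ◁ b) ≫ (α_ A.X A.X A.X).inv ≫
        ((MonObj.mul (X := A.X) ≫ ε) ▷ A.X) ≫ (λ_ A.X).hom = 𝟙 A.X)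
    (hsimple : ∀ (N : Mod C A.X) (f : N ⟶ Mod.regular A.X),
        Mono f.hom → (f.hom = 0 ∨ IsIso f.hom))
    {U V : C} (u : U ⟶ A.X) (v : V ⟶ A.X) (hu : u ≠ 0) (hv : v ≠ 0) :
    (u ⊗ₘ v) ≫ MonObj.mul (X := A.X) ≠ 0 := by
  open CategoryTheory.Limits in
  intro hzero
  -- tensoring functors are left adjoints, by rigidity
  haveI hL : (tensorLeft A.X).IsLeftAdjoint :=
    ⟨_, ⟨tensorLeftAdjunction (ᘁA.X) A.X⟩⟩
  haveI hR : (tensorRight V).IsLeftAdjoint :=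
    ⟨_, ⟨tensorRightAdjunction V (Vᘁ)⟩⟩
  -- left multiplication by the image of `u`
  set φ : A.X ⊗ U ⟶ A.X := (A.X ◁ u) ≫ MonObj.mul (X := A.X) with hφ
  have L1 : (A.X ◁ φ) ≫ MonObj.mul (X := A.X) = (α_ A.X A.X U).inv ≫ (MonObj.mul (X := A.X) ▷ U) ≫ φ :=
    stmt5_aux_modmap u
  -- the (abelian) image of φ is a left submodule of A
  set I : C := Abelian.image φ with hI
  set ι : I ⟶ A.X := Abelian.image.ι φ with hι
  have hfac : Abelian.factorThruImage φ ≫ ι = φ := Abelian.image.fac φ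
  haveI : Epi (A.X ◁ Abelian.factorThruImage φ) := by
    have : Epi ((tensorLeft A.X).map (Abelian.factorThruImage φ)) :=
      inferInstance
    simpa using this
  have hπ : (A.X ◁ ι) ≫ MonObj.mul (X := A.X) ≫ cokernel.π φ = 0 := by
    rw [← cancel_epi (A.X ◁ Abelian.factorThruImage φ), comp_zero,
      ← MonoidalCategory.whiskerLeft_comp_assoc, hfac, ← Category.assoc, L1]
    simp
  set actI : A.X ⊗ I ⟶ I :=
    kernel.lift (cokernel.π φ) ((A.X ◁ ι) ≫ MonObj.mul (X := A.X)) (by simpa using hπ) with hact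
  have hactι : actI ≫ ι = (A.X ◁ ι) ≫ MonObj.mul (X := A.X) := kernel.lift_ι _ _ _
  -- the submodule as a module object
  haveI : Mono ι := inferInstance
  letI : ModObj A.X I :=
    { smul := actI
      one_smul := by
        show MonObj.one (X := A.X) ▷ I ≫ actI = (λ_ I).hom
        rw [← cancel_mono ι, Category.assoc, hactι,
          ← whisker_exchange_assoc, MonObj.one_mul]
        simp
      mul_smul := by
        show (MonObj.mul (X := A.X) ▷ I) ≫ actI = (α_ A.X A.X I).hom ≫ (A.X ◁ actI) ≫ actI
        rw [← cancel_mono ι]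
        have lhs : (MonObj.mul (X := A.X) ▷ I) ≫ actI ≫ ι =
            (α_ A.X A.X I).hom ≫ (A.X ◁ (A.X ◁ ι)) ≫ (A.X ◁ MonObj.mul (X := A.X)) ≫ MonObj.mul (X := A.X) := by
          rw [hactι, ← whisker_exchange_assoc, MonObj.mul_assoc A.X,
            associator_naturality_right_assoc]
        have rhs : ((α_ A.X A.X I).hom ≫ (A.X ◁ actI) ≫ actI) ≫ ι =
            (α_ A.X A.X I).hom ≫ (A.X ◁ (A.X ◁ ι)) ≫ (A.X ◁ MonObj.mul (X := A.X)) ≫ MonObj.mul (X := A.X) := by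
          simp only [Category.assoc, hactι, ← MonoidalCategory.whiskerLeft_comp_assoc]
        rw [Category.assoc, lhs, rhs] }
  let N : Mod C A.X := { X := I }
  let f : N ⟶ Mod.regular A.X :=
    { hom := ι
      isModHom := ⟨by exact hactι⟩ }
  rcases hsimple N f ‹Mono ι› with h0 | hiso
  · -- the inclusion is zero, hence u = 0, contradiction
    apply hu
    have hφ0 : φ = 0 := by
      rw [← hfac]
      simp only [Mod.regular] at h0
      have : ι = 0 := h0
      rw [this, comp_zero]
    have := stmt5_aux_unit (A := A) u
    rw [← hφ] at this
    rw [← this, hφ0, comp_zero, comp_zero]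
  · -- the inclusion is iso, hence φ is epi
    haveI : IsIso ι := by exact hiso
    haveI hepiφ : Epi φ := by
      rw [← hfac]; exact epi_comp _ _
    haveI : Epi (φ ▷ V) := by
      have : Epi ((tensorRight V).map φ) := inferInstance
      simpa using this
    -- key computation: (φ ▷ V) ≫ (A ◁ v) ≫ μ = 0
    have h2 : MonObj.mul (X := A.X) ▷ V ≫ A.X ◁ v ≫ MonObj.mul (X := A.X) =
        (α_ A.X A.X V).hom ≫ A.X ◁ (A.X ◁ v ≫ MonObj.mul (X := A.X)) ≫ MonObj.mul (X := A.X) := by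
      rw [stmt5_aux_modmap v, Iso.hom_inv_id_assoc]
    have h1 : u ▷ V ≫ (A.X ◁ v ≫ MonObj.mul (X := A.X)) = 0 := by
      rw [← Category.assoc, ← MonoidalCategory.tensorHom_def, hzero]
    have hz : A.X ◁ (0 : U ⊗ V ⟶ A.X) = 0 := by
      simpa using (tensorLeft A.X).map_zero (U ⊗ V) A.X
    have key : (φ ▷ V) ≫ ((A.X ◁ v) ≫ MonObj.mul (X := A.X)) = 0 := by
      rw [hφ, comp_whiskerRight]
      simp only [Category.assoc]
      rw [h2, associator_naturality_middle_assoc,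
        ← MonoidalCategory.whiskerLeft_comp_assoc, h1, hz, zero_comp, comp_zero]
    have hv0 : (A.X ◁ v) ≫ MonObj.mul (X := A.X) = 0 := by
      rwa [← cancel_epi (φ ▷ V), comp_zero]
    apply hv
    have := stmt5_aux_unit (A := A) v
    rw [← this, hv0, comp_zero, comp_zero]
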